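/- Let T : X → X be measurable and μ a probability measure on X. Then μ is T-AMS if and only if for every bounded measurable function g : X → ℝ, the limit lim_{n→∞} (1/n) Σ_{i=0}^{n-1} ∫ g(T^i x) dμ(x) exists. -/

import Mathlib

open MeasureTheory Filter Finset

private noncomputable def birkAvg {X : Type*} [MeasurableSpace X] (T : X → X) (μ : Measure X)
    (f : X → ℝ) (n : ℕ) : ℝ :=
  (1 / (n : ℝ)) * ∑ i ∈ Finset.range n, ∫ x, f (T^[i] x) ∂μ

private lemma integrable_comp_iter {X : Type*} [MeasurableSpace X] {T : X → X}
    (hT : Measurable T) {μ : Measure X} [IsProbabilityMeasure μ] {f : X → ℝ}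
    (hf : Measurable f) {C : ℝ} (hC : ∀ x, |f x| ≤ C) (i : ℕ) :
    Integrable (fun x => f (T^[i] x)) μ := by
  refine ⟨(hf.comp (hT.iterate i)).aestronglyMeasurable, ?_⟩
  exact HasFiniteIntegral.of_bounded (C := C) (ae_of_all _ fun x => hC _)

private lemma avg_sum_tendsto {ι : Type*} (J : Finset ι) (a : ι → ℕ → ℝ) (L : ι → ℝ)
    (h : ∀ j ∈ J, Tendsto (fun n : ℕ => (1/(n:ℝ)) * ∑ i ∈ range n, a j i) atTop (nhds (L j))) :
    Tendsto (fun n : ℕ => (1/(n:ℝ)) * ∑ i ∈ range n, ∑ j ∈ J, a j i) atTop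
      (nhds (∑ j ∈ J, L j)) := by
  have e : (fun n : ℕ => (1/(n:ℝ)) * ∑ i ∈ range n, ∑ j ∈ J, a j i)
      = fun n : ℕ => ∑ j ∈ J, (1/(n:ℝ)) * ∑ i ∈ range n, a j i := by
    funext n; rw [Finset.sum_comm, Finset.mul_sum]
  rw [e]
  exact tendsto_finset_sum J h

private lemma indicator_integral {X : Type*} [MeasurableSpace X] (T : X → X) (hT : Measurable T)
    (μ : Measure X) [IsProbabilityMeasure μ] (A : Set X) (hA : MeasurableSet A) (c : ℝ) (i : ℕ) :
    ∫ x, (A.indicator fun _ => c) (T^[i] x) ∂μ = (μ (T^[i] ⁻¹' A)).toReal * c := by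
  have e : (fun x => (A.indicator fun _ => c) (T^[i] x))
      = (T^[i] ⁻¹' A).indicator fun _ => c := by
    funext x
    by_cases hx : T^[i] x ∈ A <;>
      simp [Set.indicator_apply, Set.mem_preimage, hx]
  rw [e, integral_indicator_const _ ((hT.iterate i) hA), smul_eq_mul, measureReal_def]

private lemma step_close {X : Type*} [MeasurableSpace X] (g : X → ℝ) {C ε : ℝ}
    (hC : ∀ x, |g x| ≤ C) (hε : 0 < ε) (x : X) :
    |g x - ∑ j ∈ Finset.Icc (-(⌈C/ε⌉+1)) (⌈C/ε⌉+1),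
      (g ⁻¹' Set.Ico ((j:ℝ)*ε) (((j:ℝ)+1)*ε)).indicator (fun _ => (j:ℝ)*ε) x| ≤ ε := by
  set N : ℤ := ⌈C/ε⌉ + 1 with hN
  set j₀ : ℤ := ⌊g x / ε⌋ with hj₀
  have h1 : (j₀:ℝ) * ε ≤ g x := by
    rw [← le_div_iff₀ hε]; exact Int.floor_le _
  have h2 : g x < ((j₀:ℝ)+1) * ε := by
    rw [← div_lt_iff₀ hε]
    have := Int.lt_floor_add_one (g x / ε)
    linarith
  have hmem : j₀ ∈ Finset.Icc (-N) N := by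
    rw [Finset.mem_Icc]
    have hub : g x / ε ≤ C / ε := div_le_div_of_nonneg_right ((abs_le.1 (hC x)).2) hε.le
    have hlb : -(C / ε) ≤ g x / ε := by
      rw [← neg_div]
      exact div_le_div_of_nonneg_right ((abs_le.1 (hC x)).1) hε.le
    constructor
    · calc -N ≤ -⌈C/ε⌉ := by omega
        _ ≤ ⌊-(C/ε)⌋ := by rw [Int.floor_neg]
        _ ≤ j₀ := Int.floor_mono hlb
    · calc j₀ ≤ ⌈g x / ε⌉ := Int.floor_le_ceil _
        _ ≤ ⌈C/ε⌉ := Int.ceil_le_ceil hub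
        _ ≤ N := by omega
  have hsum : ∑ j ∈ Finset.Icc (-N) N,
      (g ⁻¹' Set.Ico ((j:ℝ)*ε) (((j:ℝ)+1)*ε)).indicator (fun _ => (j:ℝ)*ε) x = (j₀:ℝ)*ε := by
    rw [Finset.sum_eq_single_of_mem j₀ hmem]
    · rw [Set.indicator_of_mem]
      exact Set.mem_preimage.2 ⟨h1, h2⟩
    · intro j _ hj
      rw [Set.indicator_of_notMem]
      rintro ⟨ha, hb⟩
      apply hj
      have ha' : (j:ℝ) ≤ g x / ε := by rw [le_div_iff₀ hε]; exact ha
      have hb' : g x / ε < (j:ℝ) + 1 := by rw [div_lt_iff₀ hε]; linarith [hb]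
      exact ((Int.floor_eq_iff (R := ℝ)).2 ⟨ha', by linarith⟩).symm
  rw [hsum, abs_sub_comm, abs_of_nonpos (by linarith), neg_sub]
  linarith

theorem ams_iff_bounded_measurable_averages_converge
    {X : Type*} [MeasurableSpace X] (T : X → X) (hT : Measurable T)
    (μ : Measure X) [IsProbabilityMeasure μ] :
    (∀ A : Set X, MeasurableSet A → ∃ L : ℝ,
      Tendsto (fun n : ℕ => (1 / (n : ℝ)) * ∑ i ∈ Finset.range n, (μ (T^[i] ⁻¹' A)).toReal)
        atTop (nhds L)) ↔
    (∀ g : X → ℝ, Measurable g → (∃ C : ℝ, ∀ x, |g x| ≤ C) → ∃ L : ℝ,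
      Tendsto (fun n : ℕ => (1 / (n : ℝ)) * ∑ i ∈ Finset.range n, ∫ x, g (T^[i] x) ∂μ)
        atTop (nhds L)) := by
  constructor
  · intro h g hg hb
    obtain ⟨C₀, hC₀⟩ := hb
    have hC : ∀ x, |g x| ≤ max C₀ 0 := fun x => (hC₀ x).trans (le_max_left _ _)
    set C := max C₀ 0 with hCdef
    have intg : ∀ i : ℕ, Integrable (fun x => g (T^[i] x)) μ :=
      fun i => integrable_comp_iter hT hg hC i
    -- approximation by step functions whose averages converge
    have key : ∀ ε : ℝ, 0 < ε → ∃ s : X → ℝ,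
        (∀ x, |g x - s x| ≤ ε) ∧ (∀ i : ℕ, Integrable (fun x => s (T^[i] x)) μ) ∧
        ∃ L : ℝ, Tendsto (birkAvg T μ s) atTop (nhds L) := by
      intro ε hε
      set N : ℤ := ⌈C/ε⌉ + 1 with hN
      set A : ℤ → Set X := fun j => g ⁻¹' Set.Ico ((j:ℝ)*ε) (((j:ℝ)+1)*ε) with hA
      have hAmeas : ∀ j, MeasurableSet (A j) := fun j => hg measurableSet_Ico
      have hind_meas : ∀ j : ℤ, Measurable ((A j).indicator (fun _ => (j:ℝ)*ε)) :=
        fun j => measurable_const.indicator (hAmeas j)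
      have hind_bd : ∀ j : ℤ, ∀ x, |(A j).indicator (fun _ => (j:ℝ)*ε) x| ≤ |(j:ℝ)*ε| := by
        intro j x
        by_cases hx : x ∈ A j <;> simp [Set.indicator_apply, hx, abs_nonneg] <;> positivity
      set s : X → ℝ := fun x => ∑ j ∈ Finset.Icc (-N) N,
        (A j).indicator (fun _ => (j:ℝ)*ε) x with hs
      have hclose : ∀ x, |g x - s x| ≤ ε := fun x => step_close g hC hε x
      have hsmeas : Measurable s :=
        Finset.measurable_sum _ (fun j _ => hind_meas j)
      have hsbd : ∀ x, |s x| ≤ C + ε := by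
        intro x
        have := hclose x
        have := hC x
        calc |s x| = |g x - (g x - s x)| := by ring_nf
          _ ≤ |g x| + |g x - s x| := abs_sub _ _
          _ ≤ C + ε := by linarith [hclose x, hC x]
      refine ⟨s, hclose, fun i => integrable_comp_iter hT hsmeas hsbd i, ?_⟩
      have hrw : ∀ i : ℕ, (∫ x, s (T^[i] x) ∂μ)
          = ∑ j ∈ Finset.Icc (-N) N, ∫ x, (A j).indicator (fun _ => (j:ℝ)*ε) (T^[i] x) ∂μ := by
        intro i
        rw [hs]
        exact integral_finset_sum _ fun j _ =>
          integrable_comp_iter hT (hind_meas j) (hind_bd j) i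
      choose L' hL' using fun j => h (A j) (hAmeas j)
      refine ⟨∑ j ∈ Finset.Icc (-N) N, L' j * ((j:ℝ)*ε), ?_⟩
      have hFs : birkAvg T μ s = fun n : ℕ => (1/(n:ℝ)) * ∑ i ∈ range n,
          ∑ j ∈ Finset.Icc (-N) N, ∫ x, (A j).indicator (fun _ => (j:ℝ)*ε) (T^[i] x) ∂μ := by
        funext n
        unfold birkAvg
        congr 1
        exact Finset.sum_congr rfl fun i _ => hrw i
      rw [hFs]
      apply avg_sum_tendsto
      intro j _
      have he : (fun n : ℕ => (1/(n:ℝ)) * ∑ i ∈ range n,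
            ∫ x, (A j).indicator (fun _ => (j:ℝ)*ε) (T^[i] x) ∂μ)
          = fun n : ℕ => ((1/(n:ℝ)) * ∑ i ∈ range n, (μ (T^[i] ⁻¹' A j)).toReal) * ((j:ℝ)*ε) := by
        funext n
        rw [Finset.sum_congr rfl (fun i _ => indicator_integral T hT μ (A j) (hAmeas j) _ i),
          ← Finset.sum_mul, ← mul_assoc]
      rw [he]
      exact (hL' j).mul_const _
    -- the averages of g form a Cauchy sequence
    have hdiff : ∀ (ε' : ℝ) (s : X → ℝ), (∀ x, |g x - s x| ≤ ε') →
        (∀ i, Integrable (fun x => s (T^[i] x)) μ) →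
        ∀ n : ℕ, 1 ≤ n → |birkAvg T μ g n - birkAvg T μ s n| ≤ ε' := by
      intro ε' s hclose hint n hn
      have hterm : ∀ i : ℕ, |∫ x, g (T^[i] x) ∂μ - ∫ x, s (T^[i] x) ∂μ| ≤ ε' := by
        intro i
        rw [← integral_sub (intg i) (hint i)]
        have hb := norm_integral_le_of_norm_le_const (μ := μ)
          (f := fun x => g (T^[i] x) - s (T^[i] x)) (C := ε')
          (ae_of_all _ fun x => by simpa using hclose (T^[i] x))
        simpa using hb
      have e : birkAvg T μ g n - birkAvg T μ s n
          = (1/(n:ℝ)) * ∑ i ∈ range n, (∫ x, g (T^[i] x) ∂μ - ∫ x, s (T^[i] x) ∂μ) := by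
        unfold birkAvg
        rw [Finset.sum_sub_distrib, mul_sub]
      have hn0 : (0:ℝ) < (n:ℝ) := by exact_mod_cast hn
      rw [e, abs_mul, abs_of_nonneg (by positivity : (0:ℝ) ≤ 1/(n:ℝ))]
      calc (1/(n:ℝ)) * |∑ i ∈ range n, (∫ x, g (T^[i] x) ∂μ - ∫ x, s (T^[i] x) ∂μ)|
          ≤ (1/(n:ℝ)) * ∑ i ∈ range n, |∫ x, g (T^[i] x) ∂μ - ∫ x, s (T^[i] x) ∂μ| := by
            exact mul_le_mul_of_nonneg_left (Finset.abs_sum_le_sum_abs _ _) (by positivity)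
        _ ≤ (1/(n:ℝ)) * ((n:ℝ) * ε') := by
            refine mul_le_mul_of_nonneg_left ?_ (by positivity)
            calc ∑ i ∈ range n, |∫ x, g (T^[i] x) ∂μ - ∫ x, s (T^[i] x) ∂μ|
                ≤ ∑ _i ∈ range n, ε' := Finset.sum_le_sum fun i _ => hterm i
              _ = (n:ℝ) * ε' := by rw [Finset.sum_const, Finset.card_range, nsmul_eq_mul]
        _ = ε' := by field_simp
    have hcauchy : CauchySeq (birkAvg T μ g) := by
      rw [Metric.cauchySeq_iff']
      intro ε hε
      obtain ⟨s, hclose, hint, L, hL⟩ := key (ε/4) (by positivity)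
      have hd := hdiff (ε/4) s hclose hint
      obtain ⟨N, hN⟩ := Metric.cauchySeq_iff'.1 hL.cauchySeq (ε/4) (by positivity)
      refine ⟨max N 1, fun n hn => ?_⟩
      have hn1 : 1 ≤ n := le_trans (le_max_right N 1) hn
      have d1 : dist (birkAvg T μ g n) (birkAvg T μ s n) ≤ ε/4 := by
        rw [Real.dist_eq]; exact hd n hn1
      have d2 : dist (birkAvg T μ s n) (birkAvg T μ s N) < ε/4 :=
        hN n (le_trans (le_max_left N 1) hn)
      have d3 : dist (birkAvg T μ s (max N 1)) (birkAvg T μ s N) < ε/4 := hN _ (le_max_left N 1)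
      have d4 : dist (birkAvg T μ s (max N 1)) (birkAvg T μ g (max N 1)) ≤ ε/4 := by
        rw [dist_comm, Real.dist_eq]; exact hd _ (le_max_right N 1)
      have t1 : dist (birkAvg T μ s n) (birkAvg T μ s (max N 1))
          ≤ dist (birkAvg T μ s n) (birkAvg T μ s N)
            + dist (birkAvg T μ s N) (birkAvg T μ s (max N 1)) := dist_triangle _ _ _
      have t2 : dist (birkAvg T μ g n) (birkAvg T μ g (max N 1))
          ≤ dist (birkAvg T μ g n) (birkAvg T μ s n)
            + dist (birkAvg T μ s n) (birkAvg T μ s (max N 1))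
            + dist (birkAvg T μ s (max N 1)) (birkAvg T μ g (max N 1)) := dist_triangle4 _ _ _ _
      have d3' : dist (birkAvg T μ s N) (birkAvg T μ s (max N 1)) < ε/4 := by
        rw [dist_comm]; exact d3
      linarith
    obtain ⟨L, hL⟩ := cauchySeq_tendsto_of_complete hcauchy
    exact ⟨L, hL⟩
  · intro h A hA
    obtain ⟨L, hL⟩ := h (A.indicator fun _ => (1:ℝ)) (measurable_const.indicator hA)
      ⟨1, fun x => by by_cases hx : x ∈ A <;> simp [Set.indicator_apply, hx]⟩
    refine ⟨L, ?_⟩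
    have he : (fun n : ℕ => (1/(n:ℝ)) * ∑ i ∈ Finset.range n, (μ (T^[i] ⁻¹' A)).toReal)
        = fun n : ℕ => (1/(n:ℝ)) * ∑ i ∈ Finset.range n,
            ∫ x, (A.indicator fun _ => (1:ℝ)) (T^[i] x) ∂μ := by
      funext n
      congr 1
      exact Finset.sum_congr rfl fun i _ =>
        (by rw [indicator_integral T hT μ A hA 1 i, mul_one])
    rw [he]
    exact hL
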